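/- The gradient of f(B) = ½‖X − D*B‖_F² is Lipschitz continuous with constant L = Σ_{ℓ=1}^k ‖(D̂^{(ℓ)})^H D̂^{(ℓ)}‖_F: for all B, C ∈ ℝ^{r×n×k}, ‖∇f(B) − ∇f(C)‖_F ≤ L ‖B − C‖_F. -/

import Mathlib

open scoped BigOperators

/-- Circular convolution of length-`k` tubes. -/
def cconv {k : ℕ} [NeZero k] (a b : ZMod k → ℝ) : ZMod k → ℝ :=
  fun ℓ => ∑ s : ZMod k, a s * b (ℓ - s)

/-- The t-product of third-order tensors. -/
def tProd {k m r n : ℕ} [NeZero k] (D : Fin m → Fin r → ZMod k → ℝ)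
    (B : Fin r → Fin n → ZMod k → ℝ) : Fin m → Fin n → ZMod k → ℝ :=
  fun i j => ∑ q : Fin r, cconv (D i q) (B q j)

/-- Tensor transpose: transpose each frontal slice and reverse the order of slices 2..k. -/
def ttr {k m n : ℕ} [NeZero k] (X : Fin m → Fin n → ZMod k → ℝ) :
    Fin n → Fin m → ZMod k → ℝ :=
  fun j i ℓ => X i j (-ℓ)

/-- Unnormalized discrete Fourier transform of a length-`k` tube. -/
noncomputable def dft {k : ℕ} [NeZero k] (x : ZMod k → ℝ) : ZMod k → ℂ :=
  fun ℓ => ∑ s : ZMod k, (x s : ℂ) *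
    Complex.exp (-2 * Real.pi * Complex.I * (ℓ.val : ℂ) * (s.val : ℂ) / (k : ℂ))

/-- Squared Frobenius norm of a third-order tensor. -/
def frobSq {k m n : ℕ} [NeZero k] (Y : Fin m → Fin n → ZMod k → ℝ) : ℝ :=
  ∑ i : Fin m, ∑ j : Fin n, ∑ ℓ : ZMod k, (Y i j ℓ) ^ 2

/-- Frobenius norm of a third-order tensor. -/
noncomputable def frobNorm {k m n : ℕ} [NeZero k] (Y : Fin m → Fin n → ZMod k → ℝ) : ℝ :=
  Real.sqrt (frobSq Y)

noncomputable def zet (k : ℕ) : ℂ := Complex.exp (-2 * Real.pi * Complex.I / k)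

lemma zet_pow_k {k : ℕ} [NeZero k] : zet k ^ k = 1 := by
  rw [zet, ← Complex.exp_nat_mul]
  have hk : (k : ℂ) ≠ 0 := Nat.cast_ne_zero.mpr (NeZero.ne k)
  have : (k : ℂ) * (-2 * Real.pi * Complex.I / k) = -2 * Real.pi * Complex.I := by
    field_simp
  rw [this]
  have := Complex.exp_int_mul_two_pi_mul_I (-1)
  convert this using 2
  push_cast; ring

lemma zet_pow_congr {k : ℕ} [NeZero k] {a b : ℕ} (h : a ≡ b [MOD k]) :
    zet k ^ a = zet k ^ b := by
  have h1 : zet k ^ a = zet k ^ (a % k) := by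
    conv_lhs => rw [← Nat.mod_add_div a k, pow_add, pow_mul, zet_pow_k, one_pow, mul_one]
  have h2 : zet k ^ b = zet k ^ (b % k) := by
    conv_lhs => rw [← Nat.mod_add_div b k, pow_add, pow_mul, zet_pow_k, one_pow, mul_one]
  rw [h1, h2, h]

noncomputable def chi {k : ℕ} [NeZero k] (ℓ s : ZMod k) : ℂ := zet k ^ (ℓ.val * s.val)

lemma chi_add {k : ℕ} [NeZero k] (ℓ s t : ZMod k) :
    chi ℓ (s + t) = chi ℓ s * chi ℓ t := by
  rw [chi, chi, chi, ← pow_add]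
  refine zet_pow_congr ?_
  have : (s + t).val ≡ s.val + t.val [MOD k] := by
    rw [ZMod.val_add]; exact (Nat.mod_modEq _ _)
  calc ℓ.val * (s + t).val ≡ ℓ.val * (s.val + t.val) [MOD k] := this.mul_left _
    _ = ℓ.val * s.val + ℓ.val * t.val := by ring

lemma chi_zero {k : ℕ} [NeZero k] (ℓ : ZMod k) : chi ℓ 0 = 1 := by
  simp [chi]

lemma abs_zet_pow {k : ℕ} [NeZero k] (a : ℕ) : ‖zet k ^ a‖ = 1 := by
  rw [norm_pow, zet, Complex.norm_exp]
  have : (-2 * (Real.pi:ℂ) * Complex.I / k).re = 0 := by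
    rw [Complex.div_re]
    simp [Complex.mul_re, Complex.mul_im]
  rw [this, Real.exp_zero, one_pow]

lemma conj_chi {k : ℕ} [NeZero k] (ℓ s : ZMod k) :
    (starRingEnd ℂ) (chi ℓ s) = chi ℓ (-s) := by
  have h1 : chi ℓ s * chi ℓ (-s) = 1 := by
    rw [← chi_add]; simp [chi_zero]
  have h2 : chi ℓ s * (starRingEnd ℂ) (chi ℓ s) = 1 := by
    rw [Complex.mul_conj, ← Complex.sq_norm]
    norm_cast
    rw [chi, abs_zet_pow, one_pow]
  have h3 : chi ℓ s ≠ 0 := by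
    intro h; rw [h, zero_mul] at h1; exact one_ne_zero h1.symm
  rw [← h1] at h2
  exact mul_left_cancel₀ h3 h2

lemma dft_eq_chi {k : ℕ} [NeZero k] (x : ZMod k → ℝ) (ℓ : ZMod k) :
    dft x ℓ = ∑ s : ZMod k, (x s : ℂ) * chi ℓ s := by
  unfold dft chi zet
  refine Finset.sum_congr rfl fun s _ => ?_
  congr 1
  rw [← Complex.exp_nat_mul]
  congr 1
  push_cast
  ring

lemma sum_zmod_val {k : ℕ} [NeZero k] {M : Type*} [AddCommMonoid M] (f : ℕ → M) :
    ∑ ℓ : ZMod k, f ℓ.val = ∑ i ∈ Finset.range k, f i := by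
  refine Finset.sum_nbij' (fun ℓ => ℓ.val) (fun i => (i : ZMod k)) ?_ ?_ ?_ ?_ ?_
  · intro a _; exact Finset.mem_range.mpr (ZMod.val_lt a)
  · intro i _; exact Finset.mem_univ _
  · intro a _; exact ZMod.natCast_rightInverse a
  · intro i hi; exact ZMod.val_cast_of_lt (Finset.mem_range.mp hi)
  · intro a _; rfl

lemma zet_prim {k : ℕ} [NeZero k] : IsPrimitiveRoot (zet k) k := by
  have h := Complex.isPrimitiveRoot_exp k (NeZero.ne k)
  have : zet k = (Complex.exp (2 * Real.pi * Complex.I / k))⁻¹ := by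
    rw [zet, ← Complex.exp_neg]; congr 1; ring
  rw [this]
  exact h.inv

lemma sum_chi {k : ℕ} [NeZero k] (d : ZMod k) :
    ∑ ℓ : ZMod k, chi ℓ d = if d = 0 then (k : ℂ) else 0 := by
  by_cases hd : d = 0
  · simp [hd, chi_zero, ZMod.card]
  · simp only [hd, if_false]
    have hη : zet k ^ d.val ≠ 1 := by
      intro h
      have := (zet_prim (k := k)).pow_eq_one_iff_dvd d.val |>.mp h
      have hlt := ZMod.val_lt d
      have hne : d.val ≠ 0 := fun h0 => hd ((ZMod.val_eq_zero d).mp h0)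
      exact hne (Nat.eq_zero_of_dvd_of_lt this hlt)
    have step : ∀ ℓ : ZMod k, chi ℓ d = (zet k ^ d.val) ^ ℓ.val := by
      intro ℓ; rw [chi, ← pow_mul, Nat.mul_comm]
    rw [Finset.sum_congr rfl fun ℓ _ => step ℓ]
    rw [sum_zmod_val (fun i => (zet k ^ d.val) ^ i)]
    rw [geom_sum_eq hη]
    have : (zet k ^ d.val) ^ k = 1 := by
      rw [← pow_mul, Nat.mul_comm, pow_mul, zet_pow_k, one_pow]
    rw [this, sub_self, zero_div]

lemma dft_cconv {k : ℕ} [NeZero k] (u v : ZMod k → ℝ) (ℓ : ZMod k) :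
    dft (cconv u v) ℓ = dft u ℓ * dft v ℓ := by
  rw [dft_eq_chi, dft_eq_chi, dft_eq_chi]
  unfold cconv
  push_cast
  simp only [Finset.sum_mul]
  rw [Finset.sum_comm]
  refine Finset.sum_congr rfl fun s _ => ?_
  have reindex : ∀ f : ZMod k → ℂ, ∑ t : ZMod k, f t = ∑ p : ZMod k, f (s + p) :=
    fun f => (Equiv.sum_comp (Equiv.addLeft s) f).symm
  rw [reindex (fun t => (u s : ℂ) * (v (t - s) : ℂ) * chi ℓ t)]
  simp only [add_sub_cancel_left, chi_add]
  rw [Finset.mul_sum]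
  refine Finset.sum_congr rfl fun p _ => ?_
  ring

lemma dft_rev {k : ℕ} [NeZero k] (u : ZMod k → ℝ) (ℓ : ZMod k) :
    dft (fun t => u (-t)) ℓ = (starRingEnd ℂ) (dft u ℓ) := by
  rw [dft_eq_chi, dft_eq_chi, map_sum]
  have reindex : ∀ f : ZMod k → ℂ, ∑ t : ZMod k, f t = ∑ p : ZMod k, f (-p) :=
    fun f => (Equiv.sum_comp (Equiv.neg (ZMod k)) f).symm
  rw [reindex (fun s => ((u (-s) : ℝ) : ℂ) * chi ℓ s)]
  simp only [neg_neg, map_mul, Complex.conj_ofReal, conj_chi]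

lemma parseval {k : ℕ} [NeZero k] (g : ZMod k → ℝ) :
    ∑ ℓ : ZMod k, ‖dft g ℓ‖ ^ 2 = k * ∑ s : ZMod k, g s ^ 2 := by
  have h1 : ∀ ℓ : ZMod k, ((‖dft g ℓ‖ ^ 2 : ℝ) : ℂ)
      = dft g ℓ * (starRingEnd ℂ) (dft g ℓ) := by
    intro ℓ
    rw [Complex.sq_norm, Complex.mul_conj]
  have key : ((∑ ℓ : ZMod k, ‖dft g ℓ‖ ^ 2 : ℝ) : ℂ)
      = ((k * ∑ s : ZMod k, g s ^ 2 : ℝ) : ℂ) := by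
    rw [Complex.ofReal_sum]
    calc ∑ ℓ : ZMod k, ((‖dft g ℓ‖ ^ 2 : ℝ) : ℂ)
        = ∑ ℓ : ZMod k, dft g ℓ * (starRingEnd ℂ) (dft g ℓ) :=
          Finset.sum_congr rfl fun ℓ _ => h1 ℓ
      _ = ∑ ℓ : ZMod k, ∑ s : ZMod k, ∑ t : ZMod k,
            (g s : ℂ) * (g t : ℂ) * chi ℓ (s - t) := by
          refine Finset.sum_congr rfl fun ℓ _ => ?_
          rw [dft_eq_chi, map_sum, Finset.sum_mul]
          refine Finset.sum_congr rfl fun s _ => ?_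
          rw [Finset.mul_sum]
          refine Finset.sum_congr rfl fun t _ => ?_
          rw [map_mul, Complex.conj_ofReal, conj_chi, sub_eq_add_neg, chi_add]
          ring
      _ = ∑ s : ZMod k, ∑ t : ZMod k,
            (g s : ℂ) * (g t : ℂ) * (∑ ℓ : ZMod k, chi ℓ (s - t)) := by
          rw [Finset.sum_comm]
          refine Finset.sum_congr rfl fun s _ => ?_
          rw [Finset.sum_comm]
          refine Finset.sum_congr rfl fun t _ => ?_
          rw [Finset.mul_sum]
      _ = ∑ s : ZMod k, (g s : ℂ) * (g s : ℂ) * k := by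
          refine Finset.sum_congr rfl fun s _ => ?_
          have h2 : ∀ t : ZMod k, (g s : ℂ) * (g t : ℂ) * (∑ ℓ : ZMod k, chi ℓ (s - t))
              = if t = s then (g s : ℂ) * (g s : ℂ) * k else 0 := by
            intro t
            rw [sum_chi]
            by_cases h : t = s
            · simp [h, sub_eq_zero]
            · have : ¬ (s - t = 0) := fun hc => h (sub_eq_zero.mp hc).symm
              simp [this, h]
          rw [Finset.sum_congr rfl fun t _ => h2 t, Finset.sum_ite_eq' Finset.univ s]
          simp
      _ = ((k * ∑ s : ZMod k, g s ^ 2 : ℝ) : ℂ) := by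
          push_cast
          rw [Finset.mul_sum]
          exact Finset.sum_congr rfl fun s _ => by ring
  exact_mod_cast key

lemma tProd_sub {k m r n : ℕ} [NeZero k] (D : Fin m → Fin r → ZMod k → ℝ)
    (B C : Fin r → Fin n → ZMod k → ℝ) :
    tProd D B - tProd D C = tProd D (B - C) := by
  funext i j ℓ
  simp only [Pi.sub_apply, tProd, cconv, Finset.sum_apply, ← Finset.sum_sub_distrib, mul_sub]

lemma tProd_assoc {k m r r' n : ℕ} [NeZero k] (A : Fin m → Fin r → ZMod k → ℝ)
    (B : Fin r → Fin r' → ZMod k → ℝ) (C : Fin r' → Fin n → ZMod k → ℝ) :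
    tProd (tProd A B) C = tProd A (tProd B C) := by
  funext i j ℓ
  have lhs : tProd (tProd A B) C i j ℓ
      = ∑ b : Fin r', ∑ u : ZMod k, ∑ q : Fin r, ∑ s : ZMod k,
          A i q s * B q b (u - s) * C b j (ℓ - u) := by
    simp only [tProd, cconv, Finset.sum_apply, Finset.sum_mul]
  have rhs : tProd A (tProd B C) i j ℓ
      = ∑ q : Fin r, ∑ s : ZMod k, ∑ b : Fin r', ∑ t : ZMod k,
          A i q s * (B q b t * C b j (ℓ - s - t)) := by
    simp only [tProd, cconv, Finset.sum_apply, Finset.mul_sum]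
  rw [lhs, rhs]
  calc ∑ b : Fin r', ∑ u : ZMod k, ∑ q : Fin r, ∑ s : ZMod k,
          A i q s * B q b (u - s) * C b j (ℓ - u)
      = ∑ b : Fin r', ∑ q : Fin r, ∑ s : ZMod k, ∑ u : ZMod k,
          A i q s * B q b (u - s) * C b j (ℓ - u) := by
        refine Finset.sum_congr rfl fun b _ => ?_
        rw [Finset.sum_comm]
        exact Finset.sum_congr rfl fun q _ => Finset.sum_comm
    _ = ∑ q : Fin r, ∑ b : Fin r', ∑ s : ZMod k, ∑ u : ZMod k,
          A i q s * B q b (u - s) * C b j (ℓ - u) := Finset.sum_comm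
    _ = ∑ q : Fin r, ∑ s : ZMod k, ∑ b : Fin r', ∑ u : ZMod k,
          A i q s * B q b (u - s) * C b j (ℓ - u) :=
        Finset.sum_congr rfl fun q _ => Finset.sum_comm
    _ = ∑ q : Fin r, ∑ s : ZMod k, ∑ b : Fin r', ∑ t : ZMod k,
          A i q s * (B q b t * C b j (ℓ - s - t)) := by
        refine Finset.sum_congr rfl fun q _ => Finset.sum_congr rfl fun s _ =>
          Finset.sum_congr rfl fun b _ => ?_
        rw [← Equiv.sum_comp (Equiv.addLeft s)
          (fun u => A i q s * B q b (u - s) * C b j (ℓ - u))]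
        refine Finset.sum_congr rfl fun t _ => ?_
        simp only [Equiv.coe_addLeft, add_sub_cancel_left]
        rw [sub_add_eq_sub_sub]
        ring

lemma dft_G {k m r : ℕ} [NeZero k] (D : Fin m → Fin r → ZMod k → ℝ)
    (a b : Fin r) (ℓ : ZMod k) :
    dft (tProd (ttr D) D a b) ℓ
      = ∑ i : Fin m, (starRingEnd ℂ) (dft (D i a) ℓ) * dft (D i b) ℓ := by
  have h : tProd (ttr D) D a b = fun t => ∑ i : Fin m, cconv (ttr D a i) (D i b) t := by
    funext t; simp [tProd, Finset.sum_apply]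
  rw [h]
  have hsum : dft (fun t => ∑ i : Fin m, cconv (ttr D a i) (D i b) t) ℓ
      = ∑ i : Fin m, dft (cconv (ttr D a i) (D i b)) ℓ := by
    unfold dft
    push_cast
    rw [Finset.sum_comm]
    exact Finset.sum_congr rfl fun s _ => by rw [Finset.sum_mul]
  rw [hsum]
  refine Finset.sum_congr rfl fun i _ => ?_
  rw [dft_cconv]
  congr 1
  have : ttr D a i = fun t => D i a (-t) := rfl
  rw [this, dft_rev]

lemma frobSq_nonneg {k m n : ℕ} [NeZero k] (Y : Fin m → Fin n → ZMod k → ℝ) :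
    0 ≤ frobSq Y := by
  unfold frobSq
  positivity

lemma frobSq_tProd_le {k r r' n : ℕ} [NeZero k] (G : Fin r → Fin r' → ZMod k → ℝ)
    (E : Fin r' → Fin n → ZMod k → ℝ) :
    frobSq (tProd G E) ≤ k * frobSq G * frobSq E := by
  have hpt : ∀ (a : Fin r) (j : Fin n) (ℓ : ZMod k), (tProd G E a j ℓ) ^ 2
      ≤ (∑ b : Fin r', ∑ s : ZMod k, G a b s ^ 2)
        * (∑ b : Fin r', ∑ t : ZMod k, E b j t ^ 2) := by
    intro a j ℓ
    have h0 : tProd G E a j ℓ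
        = ∑ p : Fin r' × ZMod k, G a p.1 p.2 * E p.1 j (ℓ - p.2) := by
      rw [Fintype.sum_prod_type]
      simp [tProd, cconv, Finset.sum_apply]
    rw [h0]
    calc (∑ p : Fin r' × ZMod k, G a p.1 p.2 * E p.1 j (ℓ - p.2)) ^ 2
        ≤ (∑ p : Fin r' × ZMod k, G a p.1 p.2 ^ 2)
          * ∑ p : Fin r' × ZMod k, E p.1 j (ℓ - p.2) ^ 2 :=
          Finset.sum_mul_sq_le_sq_mul_sq _ _ _
      _ = (∑ b : Fin r', ∑ s : ZMod k, G a b s ^ 2)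
          * (∑ b : Fin r', ∑ t : ZMod k, E b j t ^ 2) := by
          rw [Fintype.sum_prod_type, Fintype.sum_prod_type]
          congr 1
          refine Finset.sum_congr rfl fun b _ => ?_
          exact Equiv.sum_comp (Equiv.subLeft ℓ) (fun t => E b j t ^ 2)
  have step1 : frobSq (tProd G E)
      ≤ ∑ a : Fin r, ∑ j : Fin n, ∑ ℓ : ZMod k,
          (∑ b : Fin r', ∑ s : ZMod k, G a b s ^ 2)
          * (∑ b : Fin r', ∑ t : ZMod k, E b j t ^ 2) := by
    unfold frobSq
    refine Finset.sum_le_sum fun a _ => Finset.sum_le_sum fun j _ =>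
      Finset.sum_le_sum fun ℓ _ => hpt a j ℓ
  refine le_trans step1 (le_of_eq ?_)
  simp only [Finset.sum_const, Finset.card_univ, ZMod.card, nsmul_eq_mul]
  have hE : frobSq E = ∑ j : Fin n, ∑ b : Fin r', ∑ t : ZMod k, E b j t ^ 2 :=
    Finset.sum_comm
  rw [frobSq, hE, mul_assoc, Finset.sum_mul_sum, Finset.mul_sum]
  exact Finset.sum_congr rfl fun a _ => (Finset.mul_sum _ _ _).symm

/-- `∇f` is Lipschitz with constant `L = Σ_ℓ ‖(D̂^{(ℓ)})^H D̂^{(ℓ)}‖_F`. -/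
theorem gradient_lipschitz {k m r n : ℕ} [NeZero k]
    (X : Fin m → Fin n → ZMod k → ℝ) (D : Fin m → Fin r → ZMod k → ℝ)
    (gradf : (Fin r → Fin n → ZMod k → ℝ) → (Fin r → Fin n → ZMod k → ℝ))
    (hgrad : ∀ B, gradf B = tProd (ttr D) (tProd D B) - tProd (ttr D) X)
    (L : ℝ)
    (hL : L = ∑ ℓ : ZMod k, Real.sqrt (∑ a : Fin r, ∑ b : Fin r,
        ‖∑ i : Fin m, (starRingEnd ℂ) (dft (D i a) ℓ) * dft (D i b) ℓ‖ ^ 2)) :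
    ∀ B C : Fin r → Fin n → ZMod k → ℝ,
      frobNorm (gradf B - gradf C) ≤ L * frobNorm (B - C) := by
  intro B C
  have hkey : gradf B - gradf C = tProd (tProd (ttr D) D) (B - C) := by
    calc gradf B - gradf C
        = tProd (ttr D) (tProd D B) - tProd (ttr D) (tProd D C) := by
          rw [hgrad B, hgrad C]; abel
      _ = tProd (ttr D) (tProd D B - tProd D C) := tProd_sub _ _ _
      _ = tProd (ttr D) (tProd D (B - C)) := by rw [tProd_sub]
      _ = tProd (tProd (ttr D) D) (B - C) := (tProd_assoc _ _ _).symm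
  set G : Fin r → Fin r → ZMod k → ℝ := tProd (ttr D) D with hG
  have hLnn : 0 ≤ L := by
    rw [hL]; exact Finset.sum_nonneg fun ℓ _ => Real.sqrt_nonneg _
  have hsumN : ∑ ℓ : ZMod k, (∑ a : Fin r, ∑ b : Fin r,
      ‖∑ i : Fin m, (starRingEnd ℂ) (dft (D i a) ℓ) * dft (D i b) ℓ‖ ^ 2)
      = k * frobSq G := by
    have h1 : ∀ ℓ : ZMod k, ∀ a b : Fin r,
        ‖∑ i : Fin m, (starRingEnd ℂ) (dft (D i a) ℓ) * dft (D i b) ℓ‖ ^ 2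
        = ‖dft (G a b) ℓ‖ ^ 2 := by
      intro ℓ a b; rw [hG, dft_G]
    calc ∑ ℓ : ZMod k, (∑ a : Fin r, ∑ b : Fin r,
          ‖∑ i : Fin m, (starRingEnd ℂ) (dft (D i a) ℓ) * dft (D i b) ℓ‖ ^ 2)
        = ∑ ℓ : ZMod k, ∑ a : Fin r, ∑ b : Fin r, ‖dft (G a b) ℓ‖ ^ 2 := by
          exact Finset.sum_congr rfl fun ℓ _ => Finset.sum_congr rfl fun a _ =>
            Finset.sum_congr rfl fun b _ => h1 ℓ a b
      _ = ∑ a : Fin r, ∑ b : Fin r, ∑ ℓ : ZMod k, ‖dft (G a b) ℓ‖ ^ 2 := by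
          rw [Finset.sum_comm]
          exact Finset.sum_congr rfl fun a _ => Finset.sum_comm
      _ = ∑ a : Fin r, ∑ b : Fin r, (k : ℝ) * ∑ s : ZMod k, G a b s ^ 2 := by
          exact Finset.sum_congr rfl fun a _ => Finset.sum_congr rfl fun b _ => parseval _
      _ = k * frobSq G := by
          rw [frobSq, Finset.mul_sum]
          exact Finset.sum_congr rfl fun a _ => (Finset.mul_sum _ _ _).symm
  have hL2 : (k : ℝ) * frobSq G ≤ L ^ 2 := by
    rw [hL, ← hsumN]
    have := Finset.sum_sq_le_sq_sum_of_nonneg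
      (s := (Finset.univ : Finset (ZMod k)))
      (f := fun ℓ => Real.sqrt (∑ a : Fin r, ∑ b : Fin r,
        ‖∑ i : Fin m, (starRingEnd ℂ) (dft (D i a) ℓ) * dft (D i b) ℓ‖ ^ 2))
      (fun ℓ _ => Real.sqrt_nonneg _)
    refine le_trans (le_of_eq ?_) this
    refine Finset.sum_congr rfl fun ℓ _ => ?_
    rw [Real.sq_sqrt]
    positivity
  have hfs : frobSq (gradf B - gradf C) ≤ L ^ 2 * frobSq (B - C) := by
    rw [hkey]
    calc frobSq (tProd G (B - C)) ≤ k * frobSq G * frobSq (B - C) := frobSq_tProd_le _ _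
      _ ≤ L ^ 2 * frobSq (B - C) :=
        mul_le_mul_of_nonneg_right hL2 (frobSq_nonneg _)
  rw [frobNorm, frobNorm]
  calc Real.sqrt (frobSq (gradf B - gradf C))
      ≤ Real.sqrt (L ^ 2 * frobSq (B - C)) := Real.sqrt_le_sqrt hfs
    _ = L * Real.sqrt (frobSq (B - C)) := by
        rw [Real.sqrt_mul (sq_nonneg L), Real.sqrt_sq hLnn]
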